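/- Assume K is diagonal in the v_n-basis and that the kernel of K is {0}. Let y^δ ∈ Y, α > 0, and suppose the series x* = ∑_n (1/σ_n²) S_α(σ_n ⟨y^δ, u_n⟩) v_n converges in X. Then x* is the unique global minimizer of Φ_α: for every h ∈ X with h ≠ 0 one has Φ_α(x* + h) > Φ_α(x*). -/

import Mathlib

open scoped InnerProductSpace ENNReal

/-- The soft thresholding function `S_α`. -/
noncomputable def softThresh (α t : ℝ) : ℝ :=
  if t ≤ -(α / 2) then t + α / 2
  else if α / 2 ≤ t then t - α / 2
  else 0

lemma softThresh_min {σ α b : ℝ} (hσ : 0 < σ) (hα : 0 < α) (t : ℝ) :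
    (σ * ((σ^2)⁻¹ * softThresh α (σ*b)) - b)^2 + α * |(σ^2)⁻¹ * softThresh α (σ*b)|
      + σ^2 * (t - (σ^2)⁻¹ * softThresh α (σ*b))^2 ≤ (σ*t - b)^2 + α * |t| := by
  set s := (σ^2)⁻¹ * softThresh α (σ*b) with hs
  have hσ2 : (0:ℝ) < σ^2 := by positivity
  unfold softThresh at hs
  split_ifs at hs with h1 h2
  · have hs2 : σ^2 * s = σ*b + α/2 := by rw [hs]; field_simp
    have hsle : s ≤ 0 := by nlinarith
    rw [abs_of_nonpos hsle]
    have key : σ^2*s*(t-s) = (σ*b)*(t-s) + α/2*(t-s) := by linear_combination (t-s) * hs2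
    nlinarith [key, neg_abs_le t]
  · have hs2 : σ^2 * s = σ*b - α/2 := by rw [hs]; field_simp
    have hsle : 0 ≤ s := by nlinarith
    rw [abs_of_nonneg hsle]
    have key : σ^2*s*(t-s) = (σ*b)*(t-s) - α/2*(t-s) := by linear_combination (t-s) * hs2
    nlinarith [key, le_abs_self t]
  · have hs0 : s = 0 := by rw [hs]; ring
    push_neg at h1 h2
    rw [hs0]
    rcases abs_cases t with ⟨h,h'⟩|⟨h,h'⟩ <;> simp <;> nlinarith

theorem l1SVD_unique_global_minimizer {X Y : Type*}
    [NormedAddCommGroup X] [InnerProductSpace ℝ X] [CompleteSpace X]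
    [NormedAddCommGroup Y] [InnerProductSpace ℝ Y] [CompleteSpace Y]
    (K : X →L[ℝ] Y) (hK : IsCompactOperator K)
    (hker : LinearMap.ker (K : X →ₗ[ℝ] Y) = ⊥)
    (σ : ℕ → ℝ) (v : ℕ → X) (u : ℕ → Y)
    (hσ : ∀ n, 0 < σ n) (hv : Orthonormal ℝ v) (hu : Orthonormal ℝ u)
    (hKv : ∀ n, K (v n) = σ n • u n)
    (hKadj : ∀ n, (ContinuousLinearMap.adjoint K) (u n) = σ n • v n)
    (hcomplete : (Submodule.span ℝ (Set.range v)).topologicalClosure = ⊤)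
    (yδ : Y) (α : ℝ) (hα : 0 < α)
    (Φ : X → ℝ≥0∞)
    (hΦ : ∀ x, Φ x = ENNReal.ofReal (‖K x - yδ‖ ^ 2)
        + ENNReal.ofReal α * ∑' n, ENNReal.ofReal (|⟪x, v n⟫_ℝ|))
    (xstar : X)
    (hxstar : HasSum (fun n => ((σ n ^ 2)⁻¹ * softThresh α (σ n * ⟪yδ, u n⟫_ℝ)) • v n) xstar) :
    ∀ h : X, h ≠ 0 → Φ xstar < Φ (xstar + h) := by
  intro h hh
  classical
  set b : ℕ → ℝ := fun n => ⟪yδ, u n⟫_ℝ with hb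
  set c : ℕ → ℝ := fun n => (σ n ^ 2)⁻¹ * softThresh α (σ n * b n) with hc
  -- coefficients of xstar
  have hcoef : ∀ m, ⟪xstar, v m⟫_ℝ = c m := by
    intro m
    have h1 := (innerSL ℝ (v m)).hasSum hxstar
    have h2 : (fun n => (innerSL ℝ (v m)) ((c n) • v n))
        = fun n => if n = m then c m else 0 := by
      funext n
      simp only [innerSL_apply_apply, real_inner_smul_right]
      rcases eq_or_ne n m with rfl | hnm
      · simp [real_inner_self_eq_norm_sq, hv.1 n]
      · simp [hnm, hv.2 (Ne.symm hnm)]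
    rw [h2] at h1
    have h3 := hasSum_ite_eq m (c m)
    have h4 := h1.unique h3
    rw [real_inner_comm]
    exact h4
  -- diagonal action on inner products
  have hdiag : ∀ (x : X) n, ⟪u n, K x⟫_ℝ = σ n * ⟪v n, x⟫_ℝ := by
    intro x n
    rw [← ContinuousLinearMap.adjoint_inner_left, hKadj, real_inner_smul_left]
  -- Hilbert basis
  let B : HilbertBasis ℕ ℝ X := HilbertBasis.mk hv (by rw [hcomplete])
  have hBcoe : ∀ n, B n = v n := fun n => congrFun (HilbertBasis.coe_mk hv _) n
  -- expansion of K x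
  have hKexp : ∀ x : X, HasSum (fun n => (σ n * ⟪v n, x⟫_ℝ) • u n) (K x) := by
    intro x
    have h1 := B.hasSum_repr x
    have h2 := K.hasSum h1
    have h3 : (fun n => K ((B.repr x n) • B n))
        = fun n => (σ n * ⟪v n, x⟫_ℝ) • u n := by
      funext n
      rw [map_smul, B.repr_apply_apply, hBcoe, hKv, smul_smul, mul_comm]
    rwa [h3] at h2
  -- inner products of K x with any w
  have hKinner : ∀ (w : Y) (x : X),
      HasSum (fun n => (σ n * ⟪v n, x⟫_ℝ) * ⟪w, u n⟫_ℝ) ⟪w, K x⟫_ℝ := by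
    intro w x
    have h1 := (innerSL ℝ w).hasSum (hKexp x)
    simpa only [innerSL_apply_apply, real_inner_smul_right] using h1
  -- Bessel for yδ
  have hb2 : Summable (fun n => (b n)^2) := by
    have := hu.inner_products_summable (x := yδ)
    simpa [hb, real_inner_comm, sq_abs] using this
  -- key inequality instances
  have hkey : ∀ n (t : ℝ),
      (σ n * c n - b n)^2 + α * |c n| + (σ n)^2 * (t - c n)^2 ≤ (σ n * t - b n)^2 + α * |t| :=
    fun n t => softThresh_min (hσ n) hα t
  -- summability of |c|
  have hcb : ∀ n, α * |c n| ≤ (b n)^2 := by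
    intro n
    have h5 := hkey n 0
    simp only [mul_zero, zero_sub, abs_zero, add_zero, zero_mul] at h5
    nlinarith [sq_nonneg (σ n * c n - b n), mul_nonneg (sq_nonneg (σ n)) (sq_nonneg (c n)), h5]
  have hcsum : Summable (fun n => |c n|) := by
    refine Summable.of_nonneg_of_le (fun n => abs_nonneg _) (fun n => ?_) (hb2.mul_left α⁻¹)
    rw [ge_iff_le.symm]
    have := hcb n
    calc |c n| = α⁻¹ * (α * |c n|) := by field_simp
    _ ≤ α⁻¹ * (b n)^2 := by
        apply mul_le_mul_of_nonneg_left this (by positivity)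
  -- Φ xstar in real form
  set T3 : ℝ := ∑' n, |c n| with hT3
  have hT3nn : 0 ≤ T3 := tsum_nonneg (fun n => abs_nonneg _)
  have hAs : (∑' n, ENNReal.ofReal (|⟪xstar, v n⟫_ℝ|)) = ENNReal.ofReal T3 := by
    rw [hT3, ENNReal.ofReal_tsum_of_nonneg (fun n => abs_nonneg _) hcsum]
    exact tsum_congr (fun n => by rw [hcoef])
  have hΦstar : Φ xstar = ENNReal.ofReal (‖K xstar - yδ‖^2 + α * T3) := by
    rw [hΦ, hAs, ← ENNReal.ofReal_mul hα.le, ← ENNReal.ofReal_add (by positivity) (by positivity)]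
  by_cases hB : (∑' n, ENNReal.ofReal (|⟪xstar + h, v n⟫_ℝ|)) = ⊤
  · rw [hΦ (xstar + h), hB, ENNReal.mul_top (by simpa using (ENNReal.ofReal_pos.mpr hα).ne'),
      hΦstar]
    exact lt_of_lt_of_le ENNReal.ofReal_lt_top le_add_self
  · -- finite case
    have hsum2 : Summable (fun n => |⟪xstar + h, v n⟫_ℝ|) := by
      have := ENNReal.summable_toReal hB
      simpa [ENNReal.toReal_ofReal (abs_nonneg _)] using this
    set hn : ℕ → ℝ := fun n => ⟪v n, h⟫_ℝ with hhn
    have hxh : ∀ n, ⟪xstar + h, v n⟫_ℝ = c n + hn n := by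
      intro n
      rw [inner_add_left, hcoef, hhn]
      simp [real_inner_comm]
    have hsum2' : Summable (fun n => |c n + hn n|) := by
      refine hsum2.congr (fun n => by rw [hxh])
    set T2 : ℝ := ∑' n, |c n + hn n| with hT2
    have hT2nn : 0 ≤ T2 := tsum_nonneg (fun n => abs_nonneg _)
    have hBs : (∑' n, ENNReal.ofReal (|⟪xstar + h, v n⟫_ℝ|)) = ENNReal.ofReal T2 := by
      rw [hT2, ENNReal.ofReal_tsum_of_nonneg (fun n => abs_nonneg _) hsum2']
      exact tsum_congr (fun n => by rw [hxh])
    have hΦxh : Φ (xstar + h) = ENNReal.ofReal (‖K (xstar + h) - yδ‖^2 + α * T2) := by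
      rw [hΦ, hBs, ← ENNReal.ofReal_mul hα.le,
        ← ENNReal.ofReal_add (by positivity) (by positivity)]
    rw [hΦstar, hΦxh]
    rw [ENNReal.ofReal_lt_ofReal_iff_of_nonneg (by positivity)]
    -- the real inequality
    -- inner products with w = K xstar - yδ
    have hw : ∀ n, ⟪K xstar - yδ, u n⟫_ℝ = σ n * c n - b n := by
      intro n
      have h1 : ⟪K xstar, u n⟫_ℝ = σ n * c n := by
        rw [real_inner_comm (u n) (K xstar), hdiag, real_inner_comm xstar (v n), hcoef]
      rw [inner_sub_left, h1]
    have hP : HasSum (fun n => (σ n * hn n) * (σ n * c n - b n)) ⟪K xstar - yδ, K h⟫_ℝ := by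
      have := hKinner (K xstar - yδ) h
      refine this.congr_fun (fun n => by rw [hw])
    -- the nonneg sequence g
    set g : ℕ → ℝ := fun n =>
      2 * ((σ n * hn n) * (σ n * c n - b n)) + α * |c n + hn n| - α * |c n| with hg
    have hgsum : HasSum g (2 * ⟪K xstar - yδ, K h⟫_ℝ + α * T2 - α * T3) := by
      refine HasSum.sub ?_ ((hcsum.hasSum).mul_left α)
      exact (hP.mul_left 2).add ((hsum2'.hasSum).mul_left α)
    have hgnn : ∀ n, 0 ≤ g n := by
      intro n
      have hk := hkey n (c n + hn n)
      show (0:ℝ) ≤ 2 * ((σ n * hn n) * (σ n * c n - b n)) + α * |c n + hn n| - α * |c n|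
      nlinarith [hk]
    have hgval : 0 ≤ 2 * ⟪K xstar - yδ, K h⟫_ℝ + α * T2 - α * T3 :=
      hgsum.nonneg hgnn
    -- norm expansion
    have hKh : K (xstar + h) - yδ = (K xstar - yδ) + K h := by
      rw [map_add]; abel
    have hexp : ‖K (xstar + h) - yδ‖^2
        = ‖K xstar - yδ‖^2 + 2 * ⟪K xstar - yδ, K h⟫_ℝ + ‖K h‖^2 := by
      rw [hKh]
      exact norm_add_sq_real _ _
    have hKinj : Function.Injective K := LinearMap.ker_eq_bot.mp hker
    have hKh0 : K h ≠ 0 := fun h0 => hh (hKinj (by rw [h0, map_zero]))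
    have hKhpos : 0 < ‖K h‖^2 := pow_pos (norm_pos_iff.mpr hKh0) 2
    rw [hexp]
    nlinarith [hgval, hKhpos]
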